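/- Willems' fundamental lemma (one direction): if {u_k^d, y_k^d}_{k=0}^{N−1} is a trajectory of a controllable LTI system of order n and (ū, ȳ) is any length-L trajectory of the same system, and u^d is persistently exciting of order L+n, then there exists α ∈ ℝ^{N−L+1} with [H_L(u^d); H_L(y^d)] α = [ū; ȳ]. -/

import Mathlib

open Matrix

/-- `(u, y)` is a length-`len` input-output trajectory of the LTI system `(A,B,C,D)`:
there is a state sequence consistent with the dynamics on the first `len` steps. -/
def IsTraj {n m p : ℕ} (A : Matrix (Fin n) (Fin n) ℝ) (B : Matrix (Fin n) (Fin m) ℝ)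
    (C : Matrix (Fin p) (Fin n) ℝ) (D : Matrix (Fin p) (Fin m) ℝ)
    (u : ℕ → Fin m → ℝ) (y : ℕ → Fin p → ℝ) (len : ℕ) : Prop :=
  ∃ x : ℕ → Fin n → ℝ,
    (∀ k < len, x (k + 1) = A.mulVec (x k) + B.mulVec (u k)) ∧
    (∀ k < len, y k = C.mulVec (x k) + D.mulVec (u k))

/-- Block Hankel matrix of depth `L` built from `u_0, ..., u_{N-1}`. -/
def hankel {m : ℕ} (N L : ℕ) (u : ℕ → Fin m → ℝ) :
    Matrix (Fin L × Fin m) (Fin (N - L + 1)) ℝ :=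
  fun q j => u ((j : ℕ) + (q.1 : ℕ)) q.2

lemma leftker_of_full_rank {R C : Type*} [Fintype R] [Fintype C] [DecidableEq R] [DecidableEq C]
    (M : Matrix R C ℝ) (h : M.rank = Fintype.card R) :
    ∀ w : R → ℝ, w ᵥ* M = 0 → w = 0 := by
  intro w hw
  have ht : (Mᵀ).rank = Fintype.card R := by rw [Matrix.rank_transpose]; exact h
  have hker : LinearMap.ker (Mᵀ).mulVecLin = ⊥ := by
    have h2 := (Mᵀ).mulVecLin.finrank_range_add_finrank_ker
    rw [Matrix.rank] at ht
    rw [ht, Module.finrank_pi ℝ] at h2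
    have h3 : Module.finrank ℝ (LinearMap.ker (Mᵀ).mulVecLin) = 0 := by omega
    exact Submodule.finrank_eq_zero.mp h3
  have h4 : (Mᵀ).mulVecLin w = 0 := by
    rw [Matrix.mulVecLin_apply, Matrix.mulVec_transpose]; exact hw
  exact LinearMap.ker_eq_bot.mp hker (by rw [h4, map_zero])

lemma surj_of_leftker {R C : Type*} [Fintype R] [Fintype C] [DecidableEq R] [DecidableEq C]
    (M : Matrix R C ℝ) (h : ∀ w : R → ℝ, w ᵥ* M = 0 → w = 0) :
    Function.Surjective M.mulVec := by
  have hinj : Function.Injective (Mᵀ).mulVecLin := by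
    rw [← LinearMap.ker_eq_bot, LinearMap.ker_eq_bot']
    intro w hw
    exact h w (by rw [← Matrix.mulVec_transpose]; exact hw)
  have hrank : M.rank = Fintype.card R := by
    rw [← Matrix.rank_transpose, Matrix.rank, LinearMap.finrank_range_of_inj hinj,
      Module.finrank_pi ℝ]
  have htop : LinearMap.range M.mulVecLin = ⊤ := by
    apply Submodule.eq_top_of_finrank_eq
    rw [show Module.finrank ℝ (LinearMap.range M.mulVecLin) = M.rank from rfl, hrank,
      Module.finrank_pi ℝ]
  intro b
  obtain ⟨a, ha⟩ := LinearMap.range_eq_top.mp htop b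
  exact ⟨a, ha⟩

lemma sum_ite_lt' {M : Type*} [AddCommMonoid M] (K i : ℕ) (hi : i ≤ K) (f : ℕ → M) :
    ∑ s ∈ Finset.range K, (if s < i then f s else 0) = ∑ s ∈ Finset.range i, f s := by
  have h1 : ∑ s ∈ Finset.range i, (if s < i then f s else 0)
      = ∑ s ∈ Finset.range K, (if s < i then f s else 0) :=
    Finset.sum_subset (Finset.range_subset_range.mpr hi)
      (fun x _ hx => if_neg (fun h => hx (Finset.mem_range.mpr h)))
  rw [← h1]
  exact Finset.sum_congr rfl fun s hs => if_pos (Finset.mem_range.mp hs)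

lemma sum_ite_le' {M : Type*} [AddCommMonoid M] (K i : ℕ) (hi : i ≤ K) (f : ℕ → M) :
    ∑ s ∈ Finset.range K, (if i ≤ s then f s else 0)
      = ∑ r ∈ Finset.range (K - i), f (i + r) := by
  rw [Finset.range_eq_Ico, ← Finset.sum_Ico_consecutive _ (Nat.zero_le i) hi]
  have h1 : ∑ s ∈ Finset.Ico 0 i, (if i ≤ s then f s else 0) = 0 := by
    apply Finset.sum_eq_zero
    intro x hx
    exact if_neg (fun h => absurd (Finset.mem_Ico.mp hx).2 (not_lt.mpr h))
  have h2 : ∑ s ∈ Finset.Ico i K, (if i ≤ s then f s else 0) = ∑ s ∈ Finset.Ico i K, f s :=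
    Finset.sum_congr rfl fun s hs => if_pos (Finset.mem_Ico.mp hs).1
  rw [h1, h2, zero_add, Finset.sum_Ico_eq_sum_range]



lemma dotProduct_finsum {R I : Type*} [Fintype R] (u : R → ℝ) (s : Finset I) (f : I → R → ℝ) :
    u ⬝ᵥ (∑ i ∈ s, f i) = ∑ i ∈ s, u ⬝ᵥ f i := by
  simp only [dotProduct, Finset.sum_apply, Finset.mul_sum]
  rw [Finset.sum_comm]

lemma finsum_dotProduct {R I : Type*} [Fintype R] (u : R → ℝ) (s : Finset I) (f : I → R → ℝ) :
    (∑ i ∈ s, f i) ⬝ᵥ u = ∑ i ∈ s, f i ⬝ᵥ u := by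
  simp only [dotProduct, Finset.sum_apply, Finset.sum_mul]
  rw [Finset.sum_comm]

lemma vecMul_finsum {R C I : Type*} [Fintype R] (x : R → ℝ) (s : Finset I)
    (M : I → Matrix R C ℝ) : x ᵥ* (∑ i ∈ s, M i) = ∑ i ∈ s, x ᵥ* M i := by
  funext j
  simp only [Matrix.vecMul, dotProduct, Finset.sum_apply, Matrix.sum_apply,
    Finset.mul_sum]
  rw [Finset.sum_comm]

lemma vecMul_smulmat {R C : Type*} [Fintype R] (x : R → ℝ) (c : ℝ) (M : Matrix R C ℝ) :
    x ᵥ* (c • M) = c • (x ᵥ* M) := by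
  funext j
  simp only [Matrix.vecMul, dotProduct, Matrix.smul_apply, smul_eq_mul, Pi.smul_apply,
    Finset.mul_sum]
  exact Finset.sum_congr rfl fun i _ => by ring

/-- Willems' fundamental lemma (one direction): if `(u^d, y^d)` is a length-`N` trajectory of
a controllable LTI system of order `n`, `(ū, ȳ)` is any length-`L` trajectory of the same
system, and `u^d` is persistently exciting of order `L + n`, then some `α ∈ ℝ^{N−L+1}` gives
`[H_L(u^d); H_L(y^d)] α = [ū; ȳ]`. -/
theorem willems_fundamental_lemma {n m p N L : ℕ} (hL : 0 < L) (hN : L + n ≤ N)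
    (A : Matrix (Fin n) (Fin n) ℝ) (B : Matrix (Fin n) (Fin m) ℝ)
    (C : Matrix (Fin p) (Fin n) ℝ) (D : Matrix (Fin p) (Fin m) ℝ)
    (hctrb : (Matrix.of fun (i : Fin n) (q : Fin n × Fin m) =>
        (A ^ (q.1 : ℕ) * B) i q.2).rank = n)
    (ud : ℕ → Fin m → ℝ) (yd : ℕ → Fin p → ℝ)
    (hdata : IsTraj A B C D ud yd N)
    (hpe : (hankel N (L + n) ud).rank = m * (L + n))
    (ubar : ℕ → Fin m → ℝ) (ybar : ℕ → Fin p → ℝ)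
    (htraj : IsTraj A B C D ubar ybar L) :
    ∃ α : Fin (N - L + 1) → ℝ,
      (∀ k < L, ubar k = ∑ j : Fin (N - L + 1), α j • ud ((j : ℕ) + k)) ∧
      (∀ k < L, ybar k = ∑ j : Fin (N - L + 1), α j • yd ((j : ℕ) + k)) := by
  classical
  obtain ⟨xd, hxd, hyd⟩ := hdata
  obtain ⟨xb, hxb, hyb⟩ := htraj
  -- the stacked matrix [H_L(u); X]
  set Ξ : Matrix ((Fin L × Fin m) ⊕ Fin n) (Fin (N - L + 1)) ℝ :=
    Matrix.of fun r j => Sum.elim (fun q => ud ((j : ℕ) + (q.1 : ℕ)) q.2) (fun i => xd j i) r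
    with hΞ
  have hker : ∀ w : (Fin L × Fin m) ⊕ Fin n → ℝ, w ᵥ* Ξ = 0 → w = 0 := by
    intro w hw
    set ξ : Fin n → ℝ := fun i => w (Sum.inr i) with hξdef
    set v : ℕ → Fin m → ℝ :=
      fun r => if h : r < L then (fun i => w (Sum.inl (⟨r, h⟩, i))) else 0 with hvdef
    have hvL : ∀ r, L ≤ r → v r = 0 := fun r hr => dif_neg (not_lt.mpr hr)
    -- basic relation along columns
    have hrel : ∀ j : ℕ, j ≤ N - L →
        (∑ r ∈ Finset.range L, v r ⬝ᵥ ud (j + r)) + ξ ⬝ᵥ xd j = 0 := by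
      intro j hj
      have h1 := congrFun hw ⟨j, by omega⟩
      simp only [Matrix.vecMul, dotProduct, hΞ, Matrix.of_apply, Pi.zero_apply,
        Fintype.sum_sum_type, Sum.elim_inl, Sum.elim_inr] at h1
      have e1 : ∑ q : Fin L × Fin m, w (Sum.inl q) * ud (j + (q.1 : ℕ)) q.2
          = ∑ r ∈ Finset.range L, v r ⬝ᵥ ud (j + r) := by
        rw [Fintype.sum_prod_type, ← Fin.sum_univ_eq_sum_range (fun r => v r ⬝ᵥ ud (j + r)) L]
        refine Finset.sum_congr rfl fun a _ => ?_
        simp only [dotProduct, hvdef, dif_pos a.isLt, Fin.eta]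
      have e2 : ∑ i : Fin n, w (Sum.inr i) * xd j i = ξ ⬝ᵥ xd j := rfl
      rw [← e1, ← e2]
      exact h1
    -- explicit state formula
    have hxpow : ∀ j i : ℕ, j + i ≤ N →
        xd (j + i) = (A ^ i) *ᵥ xd j
          + ∑ t ∈ Finset.range i, ((A ^ (i - 1 - t) * B) *ᵥ ud (j + t)) := by
      intro j i
      induction i with
      | zero => intro _; simp
      | succ i ih =>
        intro h
        have h2 : j + i < N := by omega
        rw [show j + (i + 1) = (j + i) + 1 by omega, hxd _ h2, ih (by omega)]
        rw [Matrix.mulVec_add, Matrix.mulVec_mulVec, ← pow_succ']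
        have hsum : A *ᵥ (∑ t ∈ Finset.range i, (A ^ (i - 1 - t) * B) *ᵥ ud (j + t))
            = ∑ t ∈ Finset.range i, (A ^ (i + 1 - 1 - t) * B) *ᵥ ud (j + t) := by
          rw [← Matrix.mulVecLin_apply A, map_sum]
          refine Finset.sum_congr rfl fun t ht => ?_
          rw [Matrix.mulVecLin_apply, Matrix.mulVec_mulVec, ← Matrix.mul_assoc, ← pow_succ']
          have h3 := Finset.mem_range.mp ht
          rw [show i - 1 - t + 1 = i + 1 - 1 - t from by omega]
        rw [hsum, Finset.sum_range_succ]
        have hlast : (A ^ (i + 1 - 1 - i) * B) *ᵥ ud (j + i) = B *ᵥ ud (j + i) := by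
          norm_num
        rw [hlast]
        abel
    -- Cayley-Hamilton
    set c : ℕ → ℝ := fun i => A.charpoly.coeff i with hcdef
    have hdeg : A.charpoly.natDegree = n := by
      rw [Matrix.charpoly_natDegree_eq_dim, Fintype.card_fin]
    have hcn : c n = 1 := by
      have hm := A.charpoly_monic
      rw [hcdef]
      simpa [hdeg] using hm.coeff_natDegree
    have hCH : ∑ i ∈ Finset.range (n + 1), c i • A ^ i = 0 := by
      have h0 := A.aeval_self_charpoly
      rw [Polynomial.aeval_eq_sum_range, hdeg] at h0
      exact h0
    -- the combined row vector
    set g : ℕ → ℕ → Fin m → ℝ := fun i s =>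
      (if s < i then ξ ᵥ* (A ^ (i - 1 - s) * B) else 0) + (if i ≤ s then v (s - i) else 0)
      with hgdef
    set ζ : Fin (L + n) × Fin m → ℝ :=
      fun q => ∑ i ∈ Finset.range (n + 1), c i * g i (q.1 : ℕ) q.2 with hζdef
    -- per-i identity
    have hperi : ∀ j i : ℕ, i ≤ n → j ≤ N - L - n →
        ∑ s ∈ Finset.range (L + n), g i s ⬝ᵥ ud (j + s)
          = -((ξ ᵥ* A ^ i) ⬝ᵥ xd j) := by
      intro j i hi hj
      have hr := hrel (j + i) (by omega)
      have hx := hxpow j i (by omega)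
      have e1 : ∑ s ∈ Finset.range (L + n), g i s ⬝ᵥ ud (j + s)
          = (∑ s ∈ Finset.range (L + n),
              (if s < i then (ξ ᵥ* (A ^ (i - 1 - s) * B)) ⬝ᵥ ud (j + s) else 0))
            + ∑ s ∈ Finset.range (L + n), (if i ≤ s then v (s - i) ⬝ᵥ ud (j + s) else 0) := by
        rw [← Finset.sum_add_distrib]
        refine Finset.sum_congr rfl fun s _ => ?_
        rw [hgdef]
        simp only [add_dotProduct]
        congr 1
        · split <;> simp
        · split <;> simp
      rw [e1, sum_ite_lt' _ i (by omega), sum_ite_le' _ i (by omega)]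
      have e2 : ∑ r ∈ Finset.range (L + n - i), v (i + r - i) ⬝ᵥ ud (j + (i + r))
          = ∑ r ∈ Finset.range L, v r ⬝ᵥ ud (j + i + r) := by
        have e3 : ∑ r ∈ Finset.range L, v (i + r - i) ⬝ᵥ ud (j + (i + r))
            = ∑ r ∈ Finset.range (L + n - i), v (i + r - i) ⬝ᵥ ud (j + (i + r)) := by
          apply Finset.sum_subset (Finset.range_subset_range.mpr (by omega))
          intro x _ hx2
          rw [hvL (i + x - i) (by simp only [Finset.mem_range, not_lt] at hx2; omega)]
          simp
        rw [← e3]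
        refine Finset.sum_congr rfl fun r _ => ?_
        rw [show i + r - i = r by omega, show j + (i + r) = j + i + r by omega]
      rw [e2]
      have hexp : ξ ⬝ᵥ xd (j + i) = (ξ ᵥ* A ^ i) ⬝ᵥ xd j
          + ∑ s ∈ Finset.range i, (ξ ᵥ* (A ^ (i - 1 - s) * B)) ⬝ᵥ ud (j + s) := by
        rw [hx, dotProduct_add, Matrix.dotProduct_mulVec, dotProduct_finsum]
        congr 1
        exact Finset.sum_congr rfl fun t _ => (Matrix.dotProduct_mulVec _ _ _)
      rw [hexp] at hr
      linarith
    -- ζ kills the deep Hankel matrix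
    have hzeta : ζ ᵥ* hankel N (L + n) ud = 0 := by
      funext j
      have hjn : (j : ℕ) ≤ N - L - n := by
        have := j.isLt
        omega
      show ∑ q : Fin (L + n) × Fin m, ζ q * hankel N (L + n) ud q j = 0
      have e4 : ∑ q : Fin (L + n) × Fin m, ζ q * hankel N (L + n) ud q j
          = ∑ s ∈ Finset.range (L + n), ∑ i ∈ Finset.range (n + 1),
              c i * (g i s ⬝ᵥ ud ((j : ℕ) + s)) := by
        rw [Fintype.sum_prod_type,
          ← Fin.sum_univ_eq_sum_range
            (fun s => ∑ i ∈ Finset.range (n + 1), c i * (g i s ⬝ᵥ ud ((j : ℕ) + s))) (L + n)]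
        refine Finset.sum_congr rfl fun a _ => ?_
        simp only [hζdef, hankel, dotProduct, Finset.mul_sum]
        rw [Finset.sum_comm]
        refine Finset.sum_congr rfl fun b _ => ?_
        rw [Finset.sum_mul]
        exact Finset.sum_congr rfl fun i _ => by ring
      rw [e4, Finset.sum_comm]
      have e5 : ∀ i ∈ Finset.range (n + 1),
          ∑ s ∈ Finset.range (L + n), c i * (g i s ⬝ᵥ ud ((j : ℕ) + s))
            = c i * -((ξ ᵥ* A ^ i) ⬝ᵥ xd j) := by
        intro i hi
        rw [← Finset.mul_sum, hperi (j : ℕ) i (by have := Finset.mem_range.mp hi; omega) hjn]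
      rw [Finset.sum_congr rfl e5]
      have e6 : ∑ i ∈ Finset.range (n + 1), c i * -((ξ ᵥ* A ^ i) ⬝ᵥ xd j)
          = -((ξ ᵥ* ∑ i ∈ Finset.range (n + 1), c i • A ^ i) ⬝ᵥ xd j) := by
        rw [vecMul_finsum, finsum_dotProduct, ← Finset.sum_neg_distrib]
        refine Finset.sum_congr rfl fun i _ => ?_
        rw [vecMul_smulmat, smul_dotProduct]
        simp only [smul_eq_mul]
        ring
      rw [e6, hCH]
      simp
    -- persistence of excitation kills ζ
    have hζ0 : ζ = 0 := by
      refine leftker_of_full_rank _ ?_ ζ hzeta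
      rw [hpe]
      simp [Fintype.card_prod, Fintype.card_fin, Nat.mul_comm]
    have hz : ∀ s : ℕ, s < L + n → ∀ b : Fin m,
        ∑ i ∈ Finset.range (n + 1), c i * g i s b = 0 := by
      intro s hs b
      have h7 := congrFun hζ0 (⟨⟨s, hs⟩, b⟩ : Fin (L + n) × Fin m)
      simpa [hζdef] using h7
    -- v vanishes
    have hv : ∀ t r : ℕ, L ≤ r + t → v r = 0 := by
      intro t
      induction t with
      | zero => intro r hr; exact hvL r (by omega)
      | succ t ih =>
        intro r hr
        by_cases hrL : L ≤ r
        · exact hvL r hrL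
        push_neg at hrL
        funext b
        have h0 := hz (n + r) (by omega) b
        have hgv : ∀ i ∈ Finset.range (n + 1),
            c i * g i (n + r) b = c i * v (n + r - i) b := by
          intro i hi
          have hi' : i ≤ n := by have := Finset.mem_range.mp hi; omega
          rw [hgdef]
          simp only [Pi.add_apply, if_neg (by omega : ¬ (n + r < i)),
            if_pos (by omega : i ≤ n + r), Pi.zero_apply, zero_add]
        rw [Finset.sum_congr rfl hgv, Finset.sum_range_succ] at h0
        have hz2 : ∀ i ∈ Finset.range n, c i * v (n + r - i) b = 0 := by
          intro i hi
          have hi' : i < n := Finset.mem_range.mp hi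
          rw [ih (n + r - i) (by omega), Pi.zero_apply, mul_zero]
        rw [Finset.sum_eq_zero hz2, zero_add, hcn, one_mul,
          show n + r - n = r by omega] at h0
        exact h0
    have hv0 : ∀ r, v r = 0 := fun r => hv L r (by omega)
    -- the controllability part vanishes
    have hAB : ∀ t, t < n → ξ ᵥ* (A ^ t * B) = 0 := by
      intro t
      induction t using Nat.strong_induction_on with
      | _ t ih =>
        intro ht
        funext b
        have h0 := hz (n - 1 - t) (by omega) b
        have hgv : ∀ i ∈ Finset.range (n + 1),
            c i * g i (n - 1 - t) b
              = (if n - 1 - t + 1 ≤ i then c i * (ξ ᵥ* (A ^ (i - 1 - (n - 1 - t)) * B)) b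
                  else 0) := by
          intro i hi
          rw [hgdef]
          simp only [Pi.add_apply, hv0, Pi.zero_apply, ite_self, add_zero]
          by_cases hlt : n - 1 - t < i
          · rw [if_pos hlt, if_pos (show n - 1 - t + 1 ≤ i from by omega)]
          · rw [if_neg hlt, if_neg (show ¬ (n - 1 - t + 1 ≤ i) from by omega)]
            simp
        rw [Finset.sum_congr rfl hgv,
          sum_ite_le' (n + 1) (n - 1 - t + 1) (by omega)
            (fun i => c i * (ξ ᵥ* (A ^ (i - 1 - (n - 1 - t)) * B)) b),
          show n + 1 - (n - 1 - t + 1) = t + 1 by omega, Finset.sum_range_succ] at h0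
        have hz3 : ∀ q ∈ Finset.range t,
            c (n - 1 - t + 1 + q) * (ξ ᵥ* (A ^ (n - 1 - t + 1 + q - 1 - (n - 1 - t)) * B)) b
              = 0 := by
          intro q hq
          have hq' : q < t := Finset.mem_range.mp hq
          rw [show n - 1 - t + 1 + q - 1 - (n - 1 - t) = q by omega,
            ih q hq' (by omega), Pi.zero_apply, mul_zero]
        rw [Finset.sum_eq_zero hz3, zero_add,
          show n - 1 - t + 1 + t = n by omega,
          show n - 1 - (n - 1 - t) = t by omega, hcn, one_mul] at h0
        exact h0
    have hξ0 : ξ = 0 := by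
      refine leftker_of_full_rank
        (Matrix.of fun (i : Fin n) (q : Fin n × Fin m) => (A ^ (q.1 : ℕ) * B) i q.2)
        (by simpa [Fintype.card_fin] using hctrb) ξ ?_
      funext q
      show ∑ i : Fin n, ξ i * (A ^ (q.1 : ℕ) * B) i q.2 = 0
      have h8 := congrFun (hAB (q.1 : ℕ) q.1.isLt) q.2
      simpa [Matrix.vecMul, dotProduct] using h8
    funext r
    cases r with
    | inl q =>
      have h9 := congrFun (hv0 (q.1 : ℕ)) q.2
      show w (Sum.inl q) = 0
      rw [hvdef] at h9
      simpa [dif_pos q.1.isLt, Fin.eta] using h9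
    | inr i => exact congrFun hξ0 i

  have hsurj := surj_of_leftker Ξ hker
  obtain ⟨α, hα⟩ := hsurj (Sum.elim (fun q : Fin L × Fin m => ubar q.1 q.2) (xb 0))
  -- unpack the two block equations
  have hu : ∀ k, k < L → ∑ j : Fin (N - L + 1), α j • ud ((j : ℕ) + k) = ubar k := by
    intro k hk
    funext i
    have h1 := congrFun hα (Sum.inl (⟨k, hk⟩, i))
    simp only [Matrix.mulVec, dotProduct, hΞ, Matrix.of_apply, Sum.elim_inl] at h1
    simpa [Finset.sum_apply, mul_comm] using h1
  have hx0 : ∑ j : Fin (N - L + 1), α j • xd (j : ℕ) = xb 0 := by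
    funext i
    have h1 := congrFun hα (Sum.inr i)
    simp only [Matrix.mulVec, dotProduct, hΞ, Matrix.of_apply, Sum.elim_inr] at h1
    simpa [Finset.sum_apply, mul_comm] using h1
  -- states agree along the window
  have hjb : ∀ j : Fin (N - L + 1), (j : ℕ) ≤ N - L := fun j => Nat.lt_succ_iff.mp j.isLt
  have hstate : ∀ k, k ≤ L → ∑ j : Fin (N - L + 1), α j • xd ((j : ℕ) + k) = xb k := by
    intro k hk
    induction k with
    | zero => simpa using hx0
    | succ k ih =>
      have hk' : k < L := hk
      have hstep : ∀ j : Fin (N - L + 1),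
          xd ((j : ℕ) + k + 1) = A *ᵥ xd ((j : ℕ) + k) + B *ᵥ ud ((j : ℕ) + k) := by
        intro j
        apply hxd
        have := hjb j
        omega
      calc ∑ j : Fin (N - L + 1), α j • xd ((j : ℕ) + (k + 1))
          = ∑ j : Fin (N - L + 1), α j • (A *ᵥ xd ((j : ℕ) + k) + B *ᵥ ud ((j : ℕ) + k)) := by
            refine Finset.sum_congr rfl fun j _ => ?_
            rw [show (j : ℕ) + (k + 1) = (j : ℕ) + k + 1 by omega, hstep j]
        _ = A *ᵥ (∑ j : Fin (N - L + 1), α j • xd ((j : ℕ) + k))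
              + B *ᵥ (∑ j : Fin (N - L + 1), α j • ud ((j : ℕ) + k)) := by
            rw [← Matrix.mulVecLin_apply A, ← Matrix.mulVecLin_apply B, map_sum, map_sum,
              ← Finset.sum_add_distrib]
            refine Finset.sum_congr rfl fun j _ => ?_
            simp [smul_add]
        _ = A *ᵥ xb k + B *ᵥ ubar k := by rw [ih (le_of_lt hk'), hu k hk']
        _ = xb (k + 1) := (hxb k hk').symm
  refine ⟨α, fun k hk => (hu k hk).symm, fun k hk => ?_⟩
  have hyk : ∀ j : Fin (N - L + 1), yd ((j : ℕ) + k) = C *ᵥ xd ((j : ℕ) + k) + D *ᵥ ud ((j : ℕ) + k) := by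
    intro j
    apply hyd
    have := hjb j
    omega
  calc ybar k = C *ᵥ xb k + D *ᵥ ubar k := hyb k hk
    _ = C *ᵥ (∑ j : Fin (N - L + 1), α j • xd ((j : ℕ) + k))
          + D *ᵥ (∑ j : Fin (N - L + 1), α j • ud ((j : ℕ) + k)) := by
        rw [hstate k (le_of_lt hk), hu k hk]
    _ = ∑ j : Fin (N - L + 1), α j • yd ((j : ℕ) + k) := by
        rw [← Matrix.mulVecLin_apply C, ← Matrix.mulVecLin_apply D, map_sum, map_sum,
          ← Finset.sum_add_distrib]
        refine Finset.sum_congr rfl fun j _ => ?_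
        simp [hyk j, smul_add]
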